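/- arXiv:2109.15111 — 3 statements merged into one kernel-verified Lean document; each statement's English description precedes it below -/
import Mathlib

section
/- The ℓ1-reconstruction error of a summary S with k supernodes satisfies the closed form RE(G|S) = Σ_{i=1}^k [4e_i - 4e_i²/C(n_i,2)] + Σ_{i=1}^k Σ_{j≠i} [2e_{ij} - 2e_{ij}²/(n_i n_j)]. -/
open Finset
open scoped Classical

/-- Sum of `|g a - p|` over a set where `g` is 0/1-valued and `0 ≤ p ≤ 1`. -/
lemma sum_abs_01 {α : Type*} (s : Finset α) (g : α → ℝ)
    (hg : ∀ a ∈ s, g a = 0 ∨ g a = 1) (p : ℝ) (hp0 : 0 ≤ p) (hp1 : p ≤ 1) :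
    ∑ a ∈ s, |g a - p| =
      ((s.filter (fun a => g a = 1)).card : ℝ) * (1 - p)
        + ((s.card : ℝ) - (s.filter (fun a => g a = 1)).card) * p := by
  classical
  rw [← Finset.sum_filter_add_sum_filter_not s (fun a => g a = 1)]
  have h1 : ∑ a ∈ s.filter (fun a => g a = 1), |g a - p|
      = ((s.filter (fun a => g a = 1)).card : ℝ) * (1 - p) := by
    rw [Finset.sum_congr rfl (fun a ha => ?_), Finset.sum_const, nsmul_eq_mul]
    have hga : g a = 1 := (Finset.mem_filter.1 ha).2
    rw [hga, abs_of_nonneg (by linarith)]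
  have h2 : ∑ a ∈ s.filter (fun a => ¬ g a = 1), |g a - p|
      = ((s.filter (fun a => ¬ g a = 1)).card : ℝ) * p := by
    rw [Finset.sum_congr rfl (fun a ha => ?_), Finset.sum_const, nsmul_eq_mul]
    have hga : g a = 0 := by
      rcases hg a (Finset.mem_filter.1 ha).1 with h | h
      · exact h
      · exact absurd h (Finset.mem_filter.1 ha).2
    rw [hga, abs_of_nonpos (by linarith), neg_sub, sub_zero]
  have hcard := Finset.card_filter_add_card_filter_not
    (s := s) (p := fun a => g a = 1)
  have hcardR : ((s.filter (fun a => ¬ g a = 1)).card : ℝ)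
      = (s.card : ℝ) - (s.filter (fun a => g a = 1)).card := by
    have := congrArg (fun m : ℕ => (m : ℝ)) hcard
    push_cast at this
    linarith
  rw [h1, h2, hcardR]

/-- The ℓ1-reconstruction error of a summary `S` with `k` supernodes satisfies the
closed form
`RE(G|S) = Σ_i [4e_i - 4e_i²/C(n_i,2)] + Σ_i Σ_{j≠i} [2e_ij - 2e_ij²/(n_i n_j)]`. -/
theorem reconstruction_error_closed_form {V : Type*} [Fintype V] [DecidableEq V] {k : ℕ}
    (P : V → Fin k) (A : V → V → ℝ)
    (hA01 : ∀ u v, A u v = 0 ∨ A u v = 1)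
    (hAsym : ∀ u v, A u v = A v u)
    (hdiag : ∀ u, A u u = 0)
    (nn e : Fin k → ℕ) (eij : Fin k → Fin k → ℕ)
    (hn : ∀ i, nn i = (Finset.univ.filter (fun v => P v = i)).card)
    (hn2 : ∀ i, 2 ≤ nn i)
    (he : ∀ i, 2 * e i =
      ((Finset.univ : Finset (V × V)).filter
        (fun p => P p.1 = i ∧ P p.2 = i ∧ p.1 ≠ p.2 ∧ A p.1 p.2 = 1)).card)
    (heij : ∀ i j, i ≠ j → eij i j =
      ((Finset.univ : Finset (V × V)).filter
        (fun p => P p.1 = i ∧ P p.2 = j ∧ A p.1 p.2 = 1)).card)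
    (A' : V → V → ℝ)
    (hA' : ∀ u v, A' u v =
      if u = v then 0
      else if P u = P v then (e (P u) : ℝ) / ((nn (P u)).choose 2 : ℝ)
      else (eij (P u) (P v) : ℝ) / ((nn (P u) : ℝ) * (nn (P v) : ℝ))) :
    ∑ u, ∑ v, |A u v - A' u v|
      = (∑ i, (4 * (e i : ℝ) - 4 * (e i : ℝ) ^ 2 / ((nn i).choose 2 : ℝ)))
        + ∑ i, ∑ j ∈ Finset.univ.erase i,
            (2 * (eij i j : ℝ) - 2 * (eij i j : ℝ) ^ 2 / ((nn i : ℝ) * (nn j : ℝ))) := by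
  classical
  set f : V × V → ℝ := fun p => |A p.1 p.2 - A' p.1 p.2| with hf
  -- the inner sums per pair of supernodes
  have key : ∀ i j : Fin k,
      ∑ p ∈ (Finset.univ : Finset (V × V)).filter (fun p => P p.1 = i ∧ P p.2 = j), f p
      = if i = j then 4 * (e i : ℝ) - 4 * (e i : ℝ) ^ 2 / ((nn i).choose 2 : ℝ)
        else 2 * (eij i j : ℝ) - 2 * (eij i j : ℝ) ^ 2 / ((nn i : ℝ) * (nn j : ℝ)) := by
    intro i j
    have hniR : (0 : ℝ) < (nn i : ℝ) := by
      have := hn2 i; exact_mod_cast (by omega : 0 < nn i)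
    have hnjR : (0 : ℝ) < (nn j : ℝ) := by
      have := hn2 j; exact_mod_cast (by omega : 0 < nn j)
    set S := (Finset.univ : Finset (V × V)).filter (fun p => P p.1 = i ∧ P p.2 = j) with hS
    have hScard : S.card = nn i * nn j := by
      have hprod : S = (Finset.univ.filter (fun v => P v = i)) ×ˢ
          (Finset.univ.filter (fun v => P v = j)) := by
        ext p
        simp [hS, Finset.mem_product]
      rw [hprod, Finset.card_product, hn i, hn j]
    by_cases hij : i = j
    · -- same supernode
      subst hij
      rw [if_pos rfl]
      -- split off the diagonal
      rw [← Finset.sum_filter_add_sum_filter_not S (fun p => p.1 = p.2)]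
      have hdiag0 : ∑ p ∈ S.filter (fun p => p.1 = p.2), f p = 0 := by
        apply Finset.sum_eq_zero
        intro p hp
        have hpp : p.1 = p.2 := (Finset.mem_filter.1 hp).2
        simp [hf, hA', hpp, hdiag]
      rw [hdiag0, zero_add]
      set D := S.filter (fun p => ¬ p.1 = p.2) with hD
      -- cardinalities
      have hdiagcard : (S.filter (fun p => p.1 = p.2)).card = nn i := by
        have himg : S.filter (fun p => p.1 = p.2)
            = (Finset.univ.filter (fun v => P v = i)).image (fun v => (v, v)) := by
          ext p
          constructor
          · intro hp
            rcases Finset.mem_filter.1 hp with ⟨hp1, hp2⟩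
            rcases Finset.mem_filter.1 hp1 with ⟨-, h1, h2⟩
            refine Finset.mem_image.2 ⟨p.1, by simp [h1], ?_⟩
            exact Prod.ext rfl hp2
          · intro hp
            rcases Finset.mem_image.2 (Finset.mem_image.1 hp) with hp'
            rcases Finset.mem_image.1 hp with ⟨v, hv, rfl⟩
            have := (Finset.mem_filter.1 hv).2
            simp [hS, this]
        rw [himg, Finset.card_image_of_injective _ (fun a b h => (Prod.ext_iff.1 h).1),
          hn i]
      have hDS := Finset.card_filter_add_card_filter_not
        (s := S) (p := fun p : V × V => p.1 = p.2)
      have hDcard : D.card = nn i * nn i - nn i := by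
        rw [hD]
        omega
      -- edge count inside D
      have hEcard : (D.filter (fun p => A p.1 p.2 = 1)).card = 2 * e i := by
        rw [he i]
        congr 1
        ext p
        simp only [hD, hS, Finset.mem_filter, Finset.mem_univ, true_and, ne_eq]
        tauto
      have hEle : 2 * e i ≤ nn i * nn i - nn i := by
        rw [← hEcard, ← hDcard]
        exact Finset.card_filter_le _ _
      have hnle : nn i ≤ nn i * nn i := Nat.le_mul_of_pos_left _ (by have := hn2 i; omega)
      -- the expected value inside the block
      set C : ℝ := ((nn i).choose 2 : ℝ) with hC
      have hC2 : C = (nn i : ℝ) * ((nn i : ℝ) - 1) / 2 := by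
        rw [hC, Nat.cast_choose_two]
      have hCpos : (0 : ℝ) < C := by
        rw [hC2]
        have : (2 : ℝ) ≤ (nn i : ℝ) := by exact_mod_cast hn2 i
        nlinarith
      have h2C : 2 * C = (nn i : ℝ) * (nn i : ℝ) - (nn i : ℝ) := by
        rw [hC2]; ring
      set q : ℝ := (e i : ℝ) / C with hq
      have hq0 : 0 ≤ q := div_nonneg (by positivity) hCpos.le
      have hq1 : q ≤ 1 := by
        rw [hq, div_le_one hCpos]
        have : ((2 * e i : ℕ) : ℝ) ≤ ((nn i * nn i - nn i : ℕ) : ℝ) := by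
          exact_mod_cast hEle
        rw [Nat.cast_sub hnle] at this
        push_cast at this
        linarith [h2C]
      -- on D the expected adjacency is q
      have hDsum : ∑ p ∈ D, f p = ∑ p ∈ D, |A p.1 p.2 - q| := by
        apply Finset.sum_congr rfl
        intro p hp
        rcases Finset.mem_filter.1 hp with ⟨hp1, hp2⟩
        rcases Finset.mem_filter.1 hp1 with ⟨-, h1, h2⟩
        rw [hf]
        simp only []
        rw [hA' p.1 p.2, if_neg hp2, if_pos (by rw [h1, h2]), h1, hq, hC]
      rw [hDsum, sum_abs_01 D (fun p => A p.1 p.2) (fun p _ => hA01 p.1 p.2) q hq0 hq1,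
        hEcard, hDcard]
      have hDcardR : ((nn i * nn i - nn i : ℕ) : ℝ) = 2 * C := by
        rw [Nat.cast_sub hnle]; push_cast; linarith [h2C]
      rw [hDcardR, hq]
      field_simp
      push_cast
      ring
    · -- different supernodes
      rw [if_neg hij]
      set q : ℝ := (eij i j : ℝ) / ((nn i : ℝ) * (nn j : ℝ)) with hq
      have hdenpos : (0 : ℝ) < (nn i : ℝ) * (nn j : ℝ) := mul_pos hniR hnjR
      have hEcard : (S.filter (fun p => A p.1 p.2 = 1)).card = eij i j := by
        rw [heij i j hij]
        congr 1
        ext p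
        simp only [hS, Finset.mem_filter, Finset.mem_univ, true_and]
        tauto
      have hEle : eij i j ≤ nn i * nn j := by
        rw [← hEcard, ← hScard]
        exact Finset.card_filter_le _ _
      have hq0 : 0 ≤ q := div_nonneg (by positivity) hdenpos.le
      have hq1 : q ≤ 1 := by
        rw [hq, div_le_one hdenpos]
        exact_mod_cast hEle
      have hSsum : ∑ p ∈ S, f p = ∑ p ∈ S, |A p.1 p.2 - q| := by
        apply Finset.sum_congr rfl
        intro p hp
        rcases Finset.mem_filter.1 hp with ⟨-, h1, h2⟩
        have hne : p.1 ≠ p.2 := by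
          intro hpp
          exact hij (by rw [← h1, hpp, h2])
        rw [hf]
        simp only []
        rw [hA' p.1 p.2, if_neg hne, if_neg (by rw [h1, h2]; exact hij), h1, h2, hq]
      rw [hSsum, sum_abs_01 S (fun p => A p.1 p.2) (fun p _ => hA01 p.1 p.2) q hq0 hq1,
        hEcard, hScard, hq]
      push_cast
      field_simp
      ring
  -- assemble
  have step1 : ∑ u, ∑ v, |A u v - A' u v| = ∑ p : V × V, f p := by
    rw [Fintype.sum_prod_type]
  rw [step1, ← Finset.sum_fiberwise Finset.univ (fun p : V × V => (P p.1, P p.2)) f,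
    Fintype.sum_prod_type]
  have step2 : ∀ i j : Fin k,
      (Finset.univ : Finset (V × V)).filter (fun p => (P p.1, P p.2) = (i, j))
        = (Finset.univ : Finset (V × V)).filter (fun p => P p.1 = i ∧ P p.2 = j) := by
    intro i j
    ext p
    simp [Prod.ext_iff]
  calc ∑ i, ∑ j, ∑ p ∈ (Finset.univ : Finset (V × V)).filter
          (fun p => (P p.1, P p.2) = (i, j)), f p
      = ∑ i, ∑ j, (if i = j then 4 * (e i : ℝ) - 4 * (e i : ℝ) ^ 2 / ((nn i).choose 2 : ℝ)
          else 2 * (eij i j : ℝ) - 2 * (eij i j : ℝ) ^ 2 / ((nn i : ℝ) * (nn j : ℝ))) := by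
        refine Finset.sum_congr rfl fun i _ => Finset.sum_congr rfl fun j _ => ?_
        rw [step2 i j, key i j]
    _ = ∑ i, ((4 * (e i : ℝ) - 4 * (e i : ℝ) ^ 2 / ((nn i).choose 2 : ℝ))
          + ∑ j ∈ Finset.univ.erase i,
              (2 * (eij i j : ℝ) - 2 * (eij i j : ℝ) ^ 2 / ((nn i : ℝ) * (nn j : ℝ)))) := by
        refine Finset.sum_congr rfl fun i _ => ?_
        rw [← Finset.add_sum_erase _ _ (Finset.mem_univ i), if_pos rfl]
        congr 1
        refine Finset.sum_congr rfl fun j hj => ?_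
        rw [if_neg (Ne.symm (Finset.ne_of_mem_erase hj))]
    _ = _ := by rw [Finset.sum_add_distrib]
end

section
/- Merging two supernodes V_a and V_b changes the ℓ1-reconstruction error by score = -4e_a²/C(n_a,2) - Σ_{i≠a} 4e_{ai}²/(n_a n_i) + 4e_{ab}²/(n_a n_b) - 4e_b²/C(n_b,2) - Σ_{i≠b} 4e_{bi}²/(n_b n_i) + 4(e_a+e_b+e_{ab})²/C(n_a+n_b,2) + (4/(n_a+n_b)) Σ_{i≠a,b} (e_{ai}² + e_{bi}² + 2e_{ai}e_{bi})/n_i, where score = RE(G|S) - RE(G|S^{(a,b)}) and S^{(a,b)} is the summary obtained by merging V_a and V_b (with new node size n_a+n_b, internal edge count e_a+e_b+e_{ab}, and cross edge counts e_{ai}+e_{bi}). -/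
open Finset

set_option maxHeartbeats 1000000 in
/-- Merging two supernodes `V_a` and `V_b` changes the ℓ1-reconstruction error
(computed via its closed form) by the stated score expression. -/
theorem merge_score_closed_form {k : ℕ} (a b : Fin k) (hab : a ≠ b)
    (nn e : Fin k → ℕ) (eij : Fin k → Fin k → ℕ)
    (hsym : ∀ i j, eij i j = eij j i)
    (hn2 : ∀ i, 2 ≤ nn i)
    (REold REnew : ℝ)
    (hREold : REold =
      (∑ i, (4 * (e i : ℝ) - 4 * (e i : ℝ) ^ 2 / ((nn i).choose 2 : ℝ)))
        + ∑ i, ∑ j ∈ Finset.univ.erase i,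
            (2 * (eij i j : ℝ) - 2 * (eij i j : ℝ) ^ 2 / ((nn i : ℝ) * (nn j : ℝ))))
    (hREnew : REnew =
      (4 * ((e a : ℝ) + (e b : ℝ) + (eij a b : ℝ))
          - 4 * ((e a : ℝ) + (e b : ℝ) + (eij a b : ℝ)) ^ 2 / ((nn a + nn b).choose 2 : ℝ))
        + (∑ i ∈ (Finset.univ \ {a, b}),
            (4 * (e i : ℝ) - 4 * (e i : ℝ) ^ 2 / ((nn i).choose 2 : ℝ)))
        + (∑ i ∈ (Finset.univ \ {a, b}),
            (4 * ((eij a i : ℝ) + (eij b i : ℝ))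
              - 4 * ((eij a i : ℝ) + (eij b i : ℝ)) ^ 2
                  / (((nn a : ℝ) + (nn b : ℝ)) * (nn i : ℝ))))
        + ∑ i ∈ (Finset.univ \ {a, b}), ∑ j ∈ (Finset.univ \ {a, b}).erase i,
            (2 * (eij i j : ℝ) - 2 * (eij i j : ℝ) ^ 2 / ((nn i : ℝ) * (nn j : ℝ)))) :
    REold - REnew =
      - 4 * (e a : ℝ) ^ 2 / ((nn a).choose 2 : ℝ)
      - (∑ i ∈ Finset.univ.erase a, 4 * (eij a i : ℝ) ^ 2 / ((nn a : ℝ) * (nn i : ℝ)))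
      + 4 * (eij a b : ℝ) ^ 2 / ((nn a : ℝ) * (nn b : ℝ))
      - 4 * (e b : ℝ) ^ 2 / ((nn b).choose 2 : ℝ)
      - (∑ i ∈ Finset.univ.erase b, 4 * (eij b i : ℝ) ^ 2 / ((nn b : ℝ) * (nn i : ℝ)))
      + 4 * ((e a : ℝ) + (e b : ℝ) + (eij a b : ℝ)) ^ 2 / ((nn a + nn b).choose 2 : ℝ)
      + (4 / ((nn a : ℝ) + (nn b : ℝ)))
          * ∑ i ∈ (Finset.univ \ {a, b}),
              ((eij a i : ℝ) ^ 2 / (nn i : ℝ) + (eij b i : ℝ) ^ 2 / (nn i : ℝ)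
                + 2 * (eij a i : ℝ) * (eij b i : ℝ) / (nn i : ℝ)) := by
  have hba : b ≠ a := hab.symm
  have h0 : ∀ i, (nn i : ℝ) ≠ 0 := fun i =>
    Nat.cast_ne_zero.mpr (by have := hn2 i; omega)
  have ha0 : (0:ℝ) < nn a := by
    have := hn2 a; exact_mod_cast Nat.lt_of_lt_of_le Nat.zero_lt_two this
  have hb0 : (0:ℝ) < nn b := by
    have := hn2 b; exact_mod_cast Nat.lt_of_lt_of_le Nat.zero_lt_two this
  have hs : (nn a : ℝ) + (nn b : ℝ) ≠ 0 := by positivity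
  set R : Finset (Fin k) := Finset.univ \ {a, b} with hRdef
  have haR : a ∉ R := by simp [hRdef]
  have hbR : b ∉ R := by simp [hRdef]
  have hiR : ∀ i ∈ R, i ≠ a ∧ i ≠ b := by
    intro i hi; simp only [hRdef, Finset.mem_sdiff, Finset.mem_insert,
      Finset.mem_singleton, Finset.mem_univ, true_and] at hi; tauto
  have hsplit : ∀ f : Fin k → ℝ, ∑ i, f i = f a + f b + ∑ i ∈ R, f i := by
    intro f
    have huniv : (Finset.univ : Finset (Fin k)) = insert a (insert b R) := by
      ext i
      simp only [Finset.mem_univ, Finset.mem_insert, hRdef, Finset.mem_sdiff,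
        Finset.mem_singleton, true_iff, true_and]
      by_cases h1 : i = a
      · tauto
      · by_cases h2 : i = b <;> tauto
    rw [huniv, Finset.sum_insert (by simp [haR, hab]), Finset.sum_insert hbR]
    ring
  have heA : ∀ f : Fin k → ℝ, ∑ i ∈ Finset.univ.erase a, f i = f b + ∑ i ∈ R, f i := by
    intro f
    have hset : Finset.univ.erase a = insert b R := by
      ext i
      simp only [Finset.mem_erase, Finset.mem_univ, and_true, Finset.mem_insert,
        hRdef, Finset.mem_sdiff, Finset.mem_singleton, true_and]
      by_cases h2 : i = b
      · subst h2; tauto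
      · tauto
    rw [hset, Finset.sum_insert hbR]
  have heB : ∀ f : Fin k → ℝ, ∑ i ∈ Finset.univ.erase b, f i = f a + ∑ i ∈ R, f i := by
    intro f
    have hset : Finset.univ.erase b = insert a R := by
      ext i
      simp only [Finset.mem_erase, Finset.mem_univ, and_true, Finset.mem_insert,
        hRdef, Finset.mem_sdiff, Finset.mem_singleton, true_and]
      by_cases h1 : i = a
      · subst h1; tauto
      · tauto
    rw [hset, Finset.sum_insert haR]
  have heI : ∀ i ∈ R, ∀ f : Fin k → ℝ, ∑ j ∈ Finset.univ.erase i, f j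
      = f a + f b + ∑ j ∈ R.erase i, f j := by
    intro i hi f
    obtain ⟨hia, hib⟩ := hiR i hi
    have hset : Finset.univ.erase i = insert a (insert b (R.erase i)) := by
      ext j
      simp only [Finset.mem_erase, Finset.mem_univ, and_true, Finset.mem_insert,
        hRdef, Finset.mem_sdiff, Finset.mem_singleton, true_and]
      by_cases h1 : j = a
      · subst h1; tauto
      · by_cases h2 : j = b
        · subst h2; tauto
        · tauto
    rw [hset, Finset.sum_insert (by simp [Finset.mem_insert, Finset.mem_erase, hab, haR]),
      Finset.sum_insert (by simp [Finset.mem_erase, hbR])]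
    ring
  -- basis sums
  set L1 : ℝ := ∑ i ∈ R, (eij a i : ℝ) with hL1
  set L2 : ℝ := ∑ i ∈ R, (eij b i : ℝ) with hL2
  set Q1 : ℝ := ∑ i ∈ R, (eij a i : ℝ) ^ 2 / (nn i : ℝ) with hQ1
  set Q2 : ℝ := ∑ i ∈ R, (eij b i : ℝ) ^ 2 / (nn i : ℝ) with hQ2
  set M : ℝ := ∑ i ∈ R, (eij a i : ℝ) * (eij b i : ℝ) / (nn i : ℝ) with hM
  have hS1 : ∑ i ∈ R, (2 * (eij a i : ℝ) - 2 * (eij a i : ℝ) ^ 2 / ((nn a : ℝ) * (nn i : ℝ)))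
      = 2 * L1 - (2 / (nn a : ℝ)) * Q1 := by
    rw [hL1, hQ1, Finset.mul_sum, Finset.mul_sum, ← Finset.sum_sub_distrib]
    refine Finset.sum_congr rfl fun i _ => ?_
    field_simp
  have hS2 : ∑ i ∈ R, (2 * (eij b i : ℝ) - 2 * (eij b i : ℝ) ^ 2 / ((nn b : ℝ) * (nn i : ℝ)))
      = 2 * L2 - (2 / (nn b : ℝ)) * Q2 := by
    rw [hL2, hQ2, Finset.mul_sum, Finset.mul_sum, ← Finset.sum_sub_distrib]
    refine Finset.sum_congr rfl fun i _ => ?_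
    field_simp
  have hS3 : ∑ i ∈ R, (2 * (eij i a : ℝ) - 2 * (eij i a : ℝ) ^ 2 / ((nn i : ℝ) * (nn a : ℝ)))
      = 2 * L1 - (2 / (nn a : ℝ)) * Q1 := by
    rw [← hS1]
    refine Finset.sum_congr rfl fun i _ => ?_
    rw [hsym i a, mul_comm (nn i : ℝ) (nn a : ℝ)]
  have hS4 : ∑ i ∈ R, (2 * (eij i b : ℝ) - 2 * (eij i b : ℝ) ^ 2 / ((nn i : ℝ) * (nn b : ℝ)))
      = 2 * L2 - (2 / (nn b : ℝ)) * Q2 := by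
    rw [← hS2]
    refine Finset.sum_congr rfl fun i _ => ?_
    rw [hsym i b, mul_comm (nn i : ℝ) (nn b : ℝ)]
  have hS5 : ∑ i ∈ R, (4 * ((eij a i : ℝ) + (eij b i : ℝ))
        - 4 * ((eij a i : ℝ) + (eij b i : ℝ)) ^ 2 / (((nn a : ℝ) + (nn b : ℝ)) * (nn i : ℝ)))
      = 4 * L1 + 4 * L2 - (4 / ((nn a : ℝ) + (nn b : ℝ))) * (Q1 + Q2 + 2 * M) := by
    calc ∑ i ∈ R, (4 * ((eij a i : ℝ) + (eij b i : ℝ))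
          - 4 * ((eij a i : ℝ) + (eij b i : ℝ)) ^ 2 / (((nn a : ℝ) + (nn b : ℝ)) * (nn i : ℝ)))
        = ∑ i ∈ R, (4 * (eij a i : ℝ) + 4 * (eij b i : ℝ)
            - ((4 / ((nn a : ℝ) + (nn b : ℝ))) * ((eij a i : ℝ) ^ 2 / (nn i : ℝ))
              + (4 / ((nn a : ℝ) + (nn b : ℝ))) * ((eij b i : ℝ) ^ 2 / (nn i : ℝ))
              + (4 / ((nn a : ℝ) + (nn b : ℝ))) * (2 * ((eij a i : ℝ) * (eij b i : ℝ) / (nn i : ℝ))))) := by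
          refine Finset.sum_congr rfl fun i _ => ?_
          field_simp [h0, hs]
          ring
      _ = 4 * L1 + 4 * L2 - (4 / ((nn a : ℝ) + (nn b : ℝ))) * (Q1 + Q2 + 2 * M) := by
          simp only [Finset.sum_sub_distrib, Finset.sum_add_distrib]
          simp only [← Finset.mul_sum]
          rw [← hL1, ← hL2, ← hQ1, ← hQ2, ← hM]
          ring
  have hS6 : ∑ i ∈ R, 4 * (eij a i : ℝ) ^ 2 / ((nn a : ℝ) * (nn i : ℝ))
      = (4 / (nn a : ℝ)) * Q1 := by
    rw [hQ1, Finset.mul_sum]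
    refine Finset.sum_congr rfl fun i _ => ?_
    field_simp [h0]
  have hS7 : ∑ i ∈ R, 4 * (eij b i : ℝ) ^ 2 / ((nn b : ℝ) * (nn i : ℝ))
      = (4 / (nn b : ℝ)) * Q2 := by
    rw [hQ2, Finset.mul_sum]
    refine Finset.sum_congr rfl fun i _ => ?_
    field_simp [h0]
  have hS8 : ∑ i ∈ R, 2 * (eij a i : ℝ) * (eij b i : ℝ) / (nn i : ℝ) = 2 * M := by
    rw [hM, Finset.mul_sum]
    refine Finset.sum_congr rfl fun i _ => ?_
    ring
  have hDouble : ∑ i ∈ R, (∑ j ∈ Finset.univ.erase i,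
        (2 * (eij i j : ℝ) - 2 * (eij i j : ℝ) ^ 2 / ((nn i : ℝ) * (nn j : ℝ))))
      = ∑ i ∈ R, ((2 * (eij i a : ℝ) - 2 * (eij i a : ℝ) ^ 2 / ((nn i : ℝ) * (nn a : ℝ)))
          + (2 * (eij i b : ℝ) - 2 * (eij i b : ℝ) ^ 2 / ((nn i : ℝ) * (nn b : ℝ)))
          + ∑ j ∈ R.erase i, (2 * (eij i j : ℝ) - 2 * (eij i j : ℝ) ^ 2 / ((nn i : ℝ) * (nn j : ℝ)))) :=
    Finset.sum_congr rfl fun i hi => heI i hi _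
  rw [hREold, hREnew]
  simp only [hsplit]
  rw [hDouble]
  simp only [heA, heB, Finset.sum_add_distrib]
  rw [hS1, hS2, hS3, hS4, hS5, hS6, hS7, hS8, ← hQ1, ← hQ2, hsym b a]
  ring
end

section
/- For a pairwise-independent random hash h: {1,...,n} → {1,...,w}, the expected excess of the count-min row estimate over the true inner product of nonnegative vectors u, v is at most ‖u‖₁‖v‖₁/w: E[⟨û,v̂⟩ − ⟨u,v⟩] ≤ (1/w)·(Σ_p u_p)(Σ_q v_q). -/
open Finset
open scoped Classical

lemma countmin_row_eq {n w : ℕ} (g : Fin n → Fin w) (u v : Fin n → ℝ) :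
    (∑ j : Fin w,
        (∑ p ∈ Finset.univ.filter (fun p => g p = j), u p) *
        (∑ q ∈ Finset.univ.filter (fun q => g q = j), v q))
    = ∑ p, ∑ q, if g p = g q then u p * v q else 0 := by
  have : ∀ j : Fin w,
      (∑ p ∈ Finset.univ.filter (fun p => g p = j), u p) *
      (∑ q ∈ Finset.univ.filter (fun q => g q = j), v q)
      = ∑ p, ∑ q, if g p = j then (if g q = j then u p * v q else 0) else 0 := by
    intro j
    rw [Finset.sum_mul]
    rw [Finset.sum_filter]
    refine Finset.sum_congr rfl fun p _ => ?_
    by_cases hp : g p = j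
    · simp only [hp, if_true, Finset.mul_sum, Finset.sum_filter, mul_ite, mul_zero]
    · simp [hp]
  rw [Finset.sum_congr rfl fun j _ => this j]
  rw [Finset.sum_comm]
  refine Finset.sum_congr rfl fun p _ => ?_
  rw [Finset.sum_comm]
  refine Finset.sum_congr rfl fun q _ => ?_
  by_cases hpq : g p = g q
  · rw [hpq]
    simp [Finset.sum_ite_eq' Finset.univ (g q) (fun _ => u p * v q)]
  · have : ∀ j : Fin w, (if g p = j then (if g q = j then u p * v q else 0) else 0) = 0 := by
      intro j
      by_cases h1 : g p = j
      · have : ¬ g q = j := fun h2 => hpq (h1.trans h2.symm)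
        simp [h1, this]
      · simp [h1]
    simp [this, hpq]

/-- For a pairwise-independent random hash `h : {1,...,n} → {1,...,w}`, the
expected excess of the count-min row estimate over the true inner product of
nonnegative vectors `u, v` is at most `‖u‖₁‖v‖₁/w`. -/
theorem countmin_expected_excess {n w : ℕ} (hw : 0 < w)
    {Ω : Type*} [Fintype Ω]
    (Pr : Ω → ℝ) (hPr : ∀ ω, 0 ≤ Pr ω) (hPr1 : ∑ ω, Pr ω = 1)
    (h : Ω → Fin n → Fin w)
    (hpair : ∀ p q : Fin n, p ≠ q →
      ∑ ω ∈ Finset.univ.filter (fun ω => h ω p = h ω q), Pr ω ≤ 1 / (w : ℝ))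
    (u v : Fin n → ℝ) (hu : ∀ p, 0 ≤ u p) (hv : ∀ p, 0 ≤ v p) :
    ∑ ω, Pr ω *
        ((∑ j : Fin w,
            (∑ p ∈ Finset.univ.filter (fun p => h ω p = j), u p) *
            (∑ q ∈ Finset.univ.filter (fun q => h ω q = j), v q))
          - ∑ p, u p * v p)
      ≤ (1 / (w : ℝ)) * (∑ p, u p) * (∑ q, v q) := by
  have hdiff : ∀ ω,
      ((∑ j : Fin w,
          (∑ p ∈ Finset.univ.filter (fun p => h ω p = j), u p) *
          (∑ q ∈ Finset.univ.filter (fun q => h ω q = j), v q))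
        - ∑ p, u p * v p)
      = ∑ p, ∑ q, if p ≠ q ∧ h ω p = h ω q then u p * v q else 0 := by
    intro ω
    rw [countmin_row_eq (h ω) u v]
    rw [← Finset.sum_sub_distrib]
    refine Finset.sum_congr rfl fun p _ => ?_
    have hq : ∀ q : Fin n,
        (if h ω p = h ω q then u p * v q else 0)
          - (if p ≠ q ∧ h ω p = h ω q then u p * v q else 0)
        = if q = p then u p * v q else 0 := by
      intro q
      by_cases e : q = p
      · subst e; simp
      · have : p ≠ q := fun e' => e e'.symm
        by_cases hh : h ω p = h ω q <;> simp [hh, this, e]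
    have h1 : ∑ q, ((if h ω p = h ω q then u p * v q else 0)
          - (if p ≠ q ∧ h ω p = h ω q then u p * v q else 0)) = u p * v p := by
      rw [Finset.sum_congr rfl fun q _ => hq q]
      simp [Finset.sum_ite_eq' Finset.univ p (fun q => u p * v q)]
    rw [Finset.sum_sub_distrib] at h1
    linarith
  calc ∑ ω, Pr ω *
        ((∑ j : Fin w,
            (∑ p ∈ Finset.univ.filter (fun p => h ω p = j), u p) *
            (∑ q ∈ Finset.univ.filter (fun q => h ω q = j), v q))
          - ∑ p, u p * v p)
      = ∑ p, ∑ q, (if p ≠ q then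
          (u p * v q) * ∑ ω ∈ Finset.univ.filter (fun ω => h ω p = h ω q), Pr ω
          else 0) := by
        rw [Finset.sum_congr rfl fun ω _ => by rw [hdiff ω]]
        simp only [Finset.mul_sum]
        rw [Finset.sum_comm]
        refine Finset.sum_congr rfl fun p _ => ?_
        rw [Finset.sum_comm]
        refine Finset.sum_congr rfl fun q _ => ?_
        by_cases hpq : p ≠ q
        · rw [if_pos hpq, Finset.sum_filter]
          refine Finset.sum_congr rfl fun ω _ => ?_
          by_cases hh : h ω p = h ω q
          · rw [if_pos ⟨hpq, hh⟩, if_pos hh]; ring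
          · simp [hh]
        · rw [if_neg hpq]
          simp [hpq]
    _ ≤ ∑ p, ∑ q, (u p * v q) * (1 / (w : ℝ)) := by
        refine Finset.sum_le_sum fun p _ => Finset.sum_le_sum fun q _ => ?_
        by_cases hpq : p ≠ q
        · rw [if_pos hpq]
          exact mul_le_mul_of_nonneg_left (hpair p q hpq)
            (mul_nonneg (hu p) (hv q))
        · rw [if_neg hpq]
          have hwpos : (0:ℝ) < (w:ℝ) := by exact_mod_cast hw
          exact mul_nonneg (mul_nonneg (hu p) (hv q)) (by positivity)
    _ = (1 / (w : ℝ)) * (∑ p, u p) * (∑ q, v q) := by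
        rw [mul_assoc, Finset.sum_mul_sum, Finset.mul_sum]
        exact Finset.sum_congr rfl fun p _ => by
          rw [Finset.mul_sum]
          exact Finset.sum_congr rfl fun q _ => by ring
end
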